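/- Let T be a saturated dg-category over k with a perfect t-structure cogenerated by a point system P of dimension d. Then P strongly cogenerates the t-structure if and only if P coincides with the set of isomorphism classes of simple objects of the heart H of the induced t-structure on [T]. -/

import Mathlib

/-!
Statement 0 (Toën–Vaquié, "Systèmes de points dans les dg-catégories saturées",
Proposition 2.3 (1)):

Let `T` be a triangulated dg-category over an algebraically closed field `k` of
characteristic zero, equipped with a compact t-structure.  Then for every pair of
integers `a ≤ b`, the full sub-dg-category `T̂^{[a,b]} ⊆ T̂` is stable under filtered
colimits, and the cohomology functors `H^i_t : |T̂| → Ĥ` commute with filtered colimits.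

We model the (∞-category underlying the) dg-category `T̂` of `T^op`-dg-modules by a
`k`-linear pretriangulated category `C` with all colimits; the full subcategory of
compact objects models `T`.  A t-structure on `T` is a t-structure on `C = [T̂]`
(Mathlib's `Triangulated.TStructure`), which we equip with truncation functors and the
associated cohomology functors `H^i_t`.
-/

open CategoryTheory Limits Pretriangulated Triangulated

universe v u

namespace TV

variable {C : Type u} [Category.{v} C]

/-- An object `x` of a category is compact (ω-small) if `Hom(x, -)` commutes with all
filtered colimits. -/
def IsCompactObj (x : C) : Prop :=
  ∀ (J : Type v) [SmallCategory J] [IsFiltered J] (F : J ⥤ C) (c : Cocone F),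
    IsColimit c → Nonempty (IsColimit ((coyoneda.obj (Opposite.op x)).mapCocone c))

variable [Preadditive C] [HasZeroObject C] [HasShift C ℤ]
  [∀ (n : ℤ), (shiftFunctor C n).Additive] [Pretriangulated C]

/-- Truncation data for a t-structure: truncation functors `τ_{≤n}`, `τ_{≥n}` together
with the canonical morphisms and the associated distinguished triangles
`τ_{≤n} x ⟶ x ⟶ τ_{≥n+1} x ⟶ (τ_{≤n} x)[1]`. -/
structure Truncation (t : TStructure C) where
  truncLE (n : ℤ) : C ⥤ C
  truncGE (n : ℤ) : C ⥤ C
  truncLE_le (n : ℤ) (x : C) : t.le n ((truncLE n).obj x)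
  truncGE_ge (n : ℤ) (x : C) : t.ge n ((truncGE n).obj x)
  ι (n : ℤ) : truncLE n ⟶ 𝟭 C
  π (n : ℤ) : 𝟭 C ⟶ truncGE n
  δ (n : ℤ) (x : C) : (truncGE (n + 1)).obj x ⟶ ((truncLE n).obj x)⟦(1 : ℤ)⟧
  triangle_mem (n : ℤ) (x : C) :
    Triangle.mk ((ι n).app x) ((π (n + 1)).app x) (δ n x) ∈ distTriang C

/-- The cohomology functor `H^i_t := τ_{≤i} τ_{≥i} (-)[i]` associated to a t-structure
with truncations; it takes values in the heart `Ĥ`. -/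
def Truncation.H {t : TStructure C} (tr : Truncation t) (i : ℤ) : C ⥤ C :=
  tr.truncGE i ⋙ tr.truncLE i ⋙ shiftFunctor C i

/-- A t-structure (with truncations) is *compact* (Définition 2.2) if it is bounded
(compact objects have bounded amplitude), precompact (truncations preserve compact
objects), and the positive part `T̂^{≥0}` is stable under filtered colimits. -/
structure IsCompactTStructure (t : TStructure C) (tr : Truncation t) : Prop where
  bounded : ∀ x : C, IsCompactObj x → ∃ a b : ℤ, a ≤ b ∧ t.ge a x ∧ t.le b x
  precompact_le : ∀ (x : C) (n : ℤ), IsCompactObj x → IsCompactObj ((tr.truncLE n).obj x)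
  precompact_ge : ∀ (x : C) (n : ℤ), IsCompactObj x → IsCompactObj ((tr.truncGE n).obj x)
  ge_stable : ∀ (J : Type v) [SmallCategory J] [IsFiltered J] (F : J ⥤ C) (c : Cocone F),
    IsColimit c → (∀ j : J, t.ge 0 (F.obj j)) → t.ge 0 c.pt

variable (k : Type u) [Field k]

/-- Composition of shifted endomorphisms
`Hom(x, x[i]) ⊗ Hom(x, x[j]) ⟶ Hom(x, x[i+j])` (the product in the Ext-algebra). -/
def selfComp {x : C} {i j : ℤ} (f : x ⟶ x⟦i⟧) (g : x ⟶ x⟦j⟧) (l : ℤ) (h : j + i = l) :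
    x ⟶ x⟦l⟧ :=
  f ≫ (shiftFunctor C i).map g ≫ ((shiftFunctorAdd' C j i l h).inv.app x)

/-- A Serre functor for the saturated dg-category `T` of compact objects of `T̂`:
an autoequivalence with `k`-linear Serre duality on compact objects. -/
structure SerreOnCompacts [Linear k C] where
  S : C ⥤ C
  isEquivalence : S.IsEquivalence
  preserves_compact : ∀ x : C, IsCompactObj x → IsCompactObj (S.obj x)
  duality : ∀ x y : C, IsCompactObj x → IsCompactObj y →
    Nonempty ((y ⟶ S.obj x) ≃ₗ[k] ((x ⟶ y) →ₗ[k] k))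

/-- A *point object of dimension `d`* (Définition 5.1): a compact object with vanishing
negative self-Exts, whose Ext-algebra is free graded-commutative on `Ext¹(x,x)` placed
in degree one (`T(x,x) ≃ Sym_k(Ext¹(x,x)[-1])`, the exterior algebra on `Ext¹(x,x)`),
with `dim_k Ext¹(x,x) = d` and `S(x) ≅ x[d]`. -/
structure IsPointObject [Linear k C] (sd : SerreOnCompacts k (C := C)) (d : ℕ) (x : C) :
    Prop where
  compact : IsCompactObj x
  neg_ext : ∀ i : ℤ, i < 0 → ∀ f : x ⟶ x⟦i⟧, f = 0
  sym_ext_algebra :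
    ∃ e : ∀ i : ℕ, (x ⟶ x⟦(i : ℤ)⟧) ≃ₗ[k] (⋀[k]^i (x ⟶ x⟦(1 : ℤ)⟧)),
      ∀ (i j : ℕ) (f : x ⟶ x⟦(i : ℤ)⟧) (g : x ⟶ x⟦(j : ℤ)⟧),
        ((e (i + j) (selfComp f g ((i + j : ℕ) : ℤ) (by push_cast; ring)) :
            ⋀[k]^(i + j) (x ⟶ x⟦(1 : ℤ)⟧)) : ExteriorAlgebra k (x ⟶ x⟦(1 : ℤ)⟧)) =
          ((e i f : ⋀[k]^i (x ⟶ x⟦(1 : ℤ)⟧)) : ExteriorAlgebra k (x ⟶ x⟦(1 : ℤ)⟧)) *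
          ((e j g : ⋀[k]^j (x ⟶ x⟦(1 : ℤ)⟧)) : ExteriorAlgebra k (x ⟶ x⟦(1 : ℤ)⟧))
  dim_ext_one : Module.finrank k (x ⟶ x⟦(1 : ℤ)⟧) = d
  serre : Nonempty (sd.S.obj x ≅ x⟦(d : ℤ)⟧)

/-- A *point system of dimension `d`* (Définition 5.2) in the saturated dg-category `T`
of compact objects: a class of point objects of dimension `d`, pairwise orthogonal,
detecting the zero objects among compact objects. -/
structure IsPointSystem [Linear k C] (sd : SerreOnCompacts k (C := C)) (d : ℕ)
    (P : Set C) : Prop where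
  point : ∀ x ∈ P, IsPointObject k sd d x
  orthogonal : ∀ x ∈ P, ∀ y ∈ P, ¬ Nonempty (x ≅ y) →
    ∀ (i : ℤ) (f : x ⟶ y⟦i⟧), f = 0
  detect : ∀ E : C, IsCompactObj E →
    (IsZero E ↔ ∀ x ∈ P, ∀ (i : ℤ) (f : E ⟶ x⟦i⟧), f = 0)

/-- Monomorphisms in the heart `Ĥ` of a t-structure (viewed as a full subcategory). -/
def MonoInHeart (t : TStructure C) {x y : C} (f : x ⟶ y) : Prop :=
  ∀ z : C, t.le 0 z → t.ge 0 z → ∀ g h : z ⟶ x, g ≫ f = h ≫ f → g = h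

/-- The heart `Ĥ` is noetherian: every subobject (in `Ĥ`) of an ω-small object is
ω-small. -/
def NoetherianHeart (t : TStructure C) : Prop :=
  ∀ (x y : C) (f : x ⟶ y), (t.le 0 x ∧ t.ge 0 x) → (t.le 0 y ∧ t.ge 0 y) →
    MonoInHeart t f → IsCompactObj y → IsCompactObj x

/-- The point system `P` *cogenerates* the t-structure (Définition 5.4 (1)):
`E ∈ T^{≤0}` iff `H^i(T(E,x)) = 0` for all `x ∈ P` and all `i < 0`. -/
def Cogenerates (t : TStructure C) (P : Set C) : Prop :=
  ∀ E : C, IsCompactObj E →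
    (t.le 0 E ↔ ∀ x ∈ P, ∀ i : ℤ, i < 0 → ∀ f : E ⟶ x⟦i⟧, f = 0)

/-- The point system `P` *strongly cogenerates* the t-structure (Définition 5.4 (2)):
it cogenerates it, and an object `E` of the heart `H` is zero iff `[E,x] = 0` for all
`x ∈ P`. -/
def StronglyCogenerates (t : TStructure C) (P : Set C) : Prop :=
  Cogenerates t P ∧
    ∀ E : C, IsCompactObj E → t.le 0 E → t.ge 0 E →
      (IsZero E ↔ ∀ x ∈ P, ∀ f : E ⟶ x, f = 0)

/-- Simple objects of the heart `H = Ĥ ∩ [T]` of the induced t-structure on `[T]`: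
nonzero objects all of whose subobjects in `H` are `0` or everything. -/
def IsSimpleHeartObj (t : TStructure C) (x : C) : Prop :=
  IsCompactObj x ∧ t.le 0 x ∧ t.ge 0 x ∧ ¬ IsZero x ∧
    ∀ (y : C) (f : y ⟶ x), IsCompactObj y → t.le 0 y → t.ge 0 y →
      MonoInHeart t f → (IsZero y ∨ IsIso f)


/-! ### Auxiliary lemmas: compact objects -/
set_option linter.unusedSectionVars false

section CompactAux

lemma IsCompactObj.exists_factor {x : C} (hx : IsCompactObj x)
    {J : Type v} [SmallCategory J] [IsFiltered J] {F : J ⥤ C} {c : Cocone F}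
    (hc : IsColimit c) (h : x ⟶ c.pt) :
    ∃ (j : J) (g : x ⟶ F.obj j), g ≫ c.ι.app j = h := by
  obtain ⟨hm⟩ := hx J F c hc
  obtain ⟨j, y, hy⟩ := Types.jointly_surjective _ hm h
  exact ⟨j, y, hy⟩

lemma IsCompactObj.exists_coeq {x : C} (hx : IsCompactObj x)
    {J : Type v} [SmallCategory J] [IsFiltered J] {F : J ⥤ C} {c : Cocone F}
    (hc : IsColimit c) {j : J} (g₁ g₂ : x ⟶ F.obj j)
    (h : g₁ ≫ c.ι.app j = g₂ ≫ c.ι.app j) :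
    ∃ (l : J) (e : j ⟶ l), g₁ ≫ F.map e = g₂ ≫ F.map e := by
  obtain ⟨hm⟩ := hx J F c hc
  have h' : ((coyoneda.obj (Opposite.op x)).mapCocone c).ι.app j g₁ =
      ((coyoneda.obj (Opposite.op x)).mapCocone c).ι.app j g₂ := h
  rw [Types.FilteredColimit.isColimit_eq_iff _ hm] at h'
  obtain ⟨l, e₁, e₂, he⟩ := h'
  refine ⟨IsFiltered.coeq e₁ e₂, e₁ ≫ IsFiltered.coeqHom e₁ e₂, ?_⟩
  have he' : g₁ ≫ F.map e₁ = g₂ ≫ F.map e₂ := he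
  have hcoeq := IsFiltered.coeq_condition e₁ e₂
  calc g₁ ≫ F.map (e₁ ≫ IsFiltered.coeqHom e₁ e₂)
      = (g₁ ≫ F.map e₁) ≫ F.map (IsFiltered.coeqHom e₁ e₂) := by
        rw [F.map_comp]; simp
    _ = (g₂ ≫ F.map e₂) ≫ F.map (IsFiltered.coeqHom e₁ e₂) := by rw [he']
    _ = g₂ ≫ F.map (e₂ ≫ IsFiltered.coeqHom e₁ e₂) := by rw [F.map_comp]; simp
    _ = g₂ ≫ F.map (e₁ ≫ IsFiltered.coeqHom e₁ e₂) := by rw [← hcoeq]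

lemma isCompactObj_mk (x : C)
    (H : ∀ (J : Type v) [SmallCategory J] [IsFiltered J] (F : J ⥤ C) (c : Cocone F),
      IsColimit c →
      (∀ h : x ⟶ c.pt, ∃ (j : J) (g : x ⟶ F.obj j), g ≫ c.ι.app j = h) ∧
      (∀ (j : J) (g₁ g₂ : x ⟶ F.obj j), g₁ ≫ c.ι.app j = g₂ ≫ c.ι.app j →
        ∃ (l : J) (e : j ⟶ l), g₁ ≫ F.map e = g₂ ≫ F.map e)) :
    IsCompactObj x := by
  intro J _ _ F c hc
  obtain ⟨hsurj, hinj⟩ := H J F c hc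
  refine ⟨Types.FilteredColimit.isColimitOf _ _ ?_ ?_⟩
  · intro h
    obtain ⟨j, g, hg⟩ := hsurj h
    exact ⟨j, g, hg.symm⟩
  · intro i j xi xj hij
    have h1 : (xi ≫ F.map (IsFiltered.leftToMax i j)) ≫ c.ι.app (IsFiltered.max i j)
        = (xj ≫ F.map (IsFiltered.rightToMax i j)) ≫ c.ι.app (IsFiltered.max i j) := by
      have e1 := c.w (IsFiltered.leftToMax i j)
      have e2 := c.w (IsFiltered.rightToMax i j)
      have hij' : xi ≫ c.ι.app i = xj ≫ c.ι.app j := hij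
      rw [Category.assoc, Category.assoc, e1, e2, hij']
    obtain ⟨l, e, he⟩ := hinj _ _ _ h1
    refine ⟨l, IsFiltered.leftToMax i j ≫ e, IsFiltered.rightToMax i j ≫ e, ?_⟩
    have : xi ≫ F.map (IsFiltered.leftToMax i j ≫ e)
        = xj ≫ F.map (IsFiltered.rightToMax i j ≫ e) := by
      rw [F.map_comp, F.map_comp, ← Category.assoc, ← Category.assoc]
      exact he
    exact this

lemma IsCompactObj.shift {x : C} (hx : IsCompactObj x) (n : ℤ) :
    IsCompactObj (x⟦n⟧) := by
  apply isCompactObj_mk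
  intro J _ _ F c hc
  let adj := (shiftEquiv C n).toAdjunction
  have hc' : IsColimit ((shiftFunctor C (-n)).mapCocone c) :=
    isColimitOfPreserves (shiftFunctor C (-n)) hc
  constructor
  · intro h
    obtain ⟨j, g, hg⟩ := hx.exists_factor hc' (adj.homEquiv x c.pt h)
    have hg' : g ≫ (shiftFunctor C (-n)).map (c.ι.app j) = adj.homEquiv x c.pt h := hg
    refine ⟨j, (adj.homEquiv x (F.obj j)).symm g, ?_⟩
    apply (adj.homEquiv x c.pt).injective
    have e1 := adj.homEquiv_naturality_right ((adj.homEquiv x (F.obj j)).symm g) (c.ι.app j)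
    refine e1.trans ?_
    erw [Equiv.apply_symm_apply]
    exact hg'
  · intro j g₁ g₂ hg
    have e1 := adj.homEquiv_naturality_right g₁ (c.ι.app j)
    have e2 := adj.homEquiv_naturality_right g₂ (c.ι.app j)
    have h1 : (adj.homEquiv x (F.obj j) g₁) ≫ ((shiftFunctor C (-n)).mapCocone c).ι.app j
        = (adj.homEquiv x (F.obj j) g₂) ≫ ((shiftFunctor C (-n)).mapCocone c).ι.app j :=
      e1.symm.trans ((congrArg (adj.homEquiv x c.pt) hg).trans e2)
    obtain ⟨l, e, he⟩ := hx.exists_coeq hc' _ _ h1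
    refine ⟨l, e, ?_⟩
    apply (adj.homEquiv x (F.obj l)).injective
    have e1' := adj.homEquiv_naturality_right g₁ (F.map e)
    have e2' := adj.homEquiv_naturality_right g₂ (F.map e)
    exact e1'.trans (he.trans e2'.symm)

lemma isCompactObj₃_of_distTriang (T : Triangle C) (hT : T ∈ distTriang C)
    (h₁ : IsCompactObj T.obj₁) (h₂ : IsCompactObj T.obj₂) :
    IsCompactObj T.obj₃ := by
  apply isCompactObj_mk
  intro J _ _ F c hc
  let ci : ∀ j, F.obj j ⟶ c.pt := fun j => c.ι.app j
  have cw : ∀ {i j : J} (e : i ⟶ j), F.map e ≫ ci j = ci i := fun e => c.w e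
  have hfac : ∀ {x : C}, IsCompactObj x → ∀ h : x ⟶ c.pt,
      ∃ (j : J) (g : x ⟶ F.obj j), g ≫ ci j = h := fun hx h => hx.exists_factor hc h
  have hcoe : ∀ {x : C}, IsCompactObj x → ∀ {j : J} (g₁ g₂ : x ⟶ F.obj j),
      g₁ ≫ ci j = g₂ ≫ ci j →
      ∃ (l : J) (e : j ⟶ l), g₁ ≫ F.map e = g₂ ≫ F.map e :=
    by intro x hx j g₁ g₂ h; exact hx.exists_coeq hc g₁ g₂ h
  constructor
  · -- surjectivity
    intro h
    obtain ⟨j, β, hβ⟩ := hfac h₂ (T.mor₂ ≫ h)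
    obtain ⟨l, e, he⟩ := hcoe h₁ (T.mor₁ ≫ β) 0 (by
      rw [Category.assoc, hβ, zero_comp, ← Category.assoc,
        comp_distTriang_mor_zero₁₂ T hT, zero_comp])
    rw [zero_comp] at he
    obtain ⟨γ, hγ⟩ := Triangle.yoneda_exact₂ T hT (β ≫ F.map e) (by
      rw [← Category.assoc]; exact he)
    have hd : T.mor₂ ≫ ((γ ≫ ci l) - h) = 0 := by
      have h5 : T.mor₂ ≫ γ ≫ ci l = T.mor₂ ≫ h := by
        rw [← Category.assoc, ← hγ, Category.assoc, cw e, hβ]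
      rw [Preadditive.comp_sub, h5, sub_self]
    obtain ⟨ε, hε⟩ := Triangle.yoneda_exact₃ T hT _ hd
    obtain ⟨m, ε', hε'⟩ := hfac (h₁.shift 1) ε
    refine ⟨IsFiltered.max l m,
      γ ≫ F.map (IsFiltered.leftToMax l m) - T.mor₃ ≫ ε' ≫ F.map (IsFiltered.rightToMax l m), ?_⟩
    have expand : (γ ≫ F.map (IsFiltered.leftToMax l m)
          - T.mor₃ ≫ ε' ≫ F.map (IsFiltered.rightToMax l m)) ≫ ci (IsFiltered.max l m)
        = γ ≫ ci l - T.mor₃ ≫ ε' ≫ ci m := by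
      rw [Preadditive.sub_comp, Category.assoc, Category.assoc, Category.assoc,
        cw (IsFiltered.leftToMax l m), cw (IsFiltered.rightToMax l m)]
    rw [expand, hε']
    have := hε.symm
    -- hε : (γ ≫ ci l) - h = T.mor₃ ≫ ε
    rw [sub_eq_iff_eq_add] at hε
    rw [hε]; abel
  · -- injectivity
    intro j g₁ g₂ hg
    have hd : ((g₁ - g₂) ≫ ci j : T.obj₃ ⟶ c.pt) = 0 := by
      rw [Preadditive.sub_comp, hg, sub_self]
    obtain ⟨l, e, he⟩ := hcoe h₂ (T.mor₂ ≫ (g₁ - g₂)) 0 (by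
      rw [Category.assoc, hd, comp_zero, zero_comp])
    rw [zero_comp] at he
    obtain ⟨ε, hε⟩ := Triangle.yoneda_exact₃ T hT ((g₁ - g₂) ≫ F.map e) (by
      rw [← Category.assoc]; exact he)
    have hwε : T.rotate.mor₂ ≫ (ε ≫ ci l) = 0 := by
      have : T.mor₃ ≫ ε ≫ ci l = 0 := by
        rw [← Category.assoc, ← hε, Category.assoc, cw e, hd]
      exact this
    obtain ⟨ψ, hψ⟩ := Triangle.yoneda_exact₃ _ (rot_of_distTriang T hT) (ε ≫ ci l) hwε
    obtain ⟨m, ψ', hψ'⟩ := hfac (h₂.shift 1) ψ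
    have hcomp : (ε ≫ F.map (IsFiltered.leftToMax l m)) ≫ ci (IsFiltered.max l m)
        = ((T.rotate.mor₃ ≫ ψ') ≫ F.map (IsFiltered.rightToMax l m)) ≫
            ci (IsFiltered.max l m) := by
      simp only [Category.assoc, cw]
      erw [hψ, ← hψ']
      exact (Category.assoc _ _ _).symm
    obtain ⟨p, q, hq⟩ := hcoe (h₁.shift 1) _ _ hcomp
    refine ⟨p, e ≫ IsFiltered.leftToMax l m ≫ q, ?_⟩
    have h3 : T.mor₃ ≫ T.rotate.mor₃ = 0 := by
      have h4 := comp_distTriang_mor_zero₃₁ T hT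
      show T.mor₃ ≫ (-(shiftFunctor C (1:ℤ)).map T.mor₁) = 0
      rw [Preadditive.comp_neg, h4, neg_zero]
    simp only [Category.assoc] at hq
    have key : (g₁ - g₂) ≫ F.map (e ≫ IsFiltered.leftToMax l m ≫ q) = 0 := by
      rw [F.map_comp, F.map_comp, reassoc_of% hε]; erw [hq]
      exact ((Category.assoc _ _ _).symm.trans (congrArg (· ≫ F.map q)
        ((Category.assoc _ _ _).symm.trans (congrArg (· ≫ F.map (IsFiltered.rightToMax l m))
          (((Category.assoc _ _ _).symm.trans (congrArg (· ≫ ψ') h3)).trans zero_comp))))).trans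
        (by simp)
    have key2 : g₁ ≫ F.map (e ≫ IsFiltered.leftToMax l m ≫ q)
        - g₂ ≫ F.map (e ≫ IsFiltered.leftToMax l m ≫ q) = 0 := by
      rw [← Preadditive.sub_comp]; exact key
    exact sub_eq_zero.mp key2

end CompactAux

/-! ### Auxiliary lemmas: t-structures and truncations -/

section TStructureAux

variable (t : TStructure C) (tr : Truncation t)

lemma tzero {X Y : C} {a b : ℤ} (hab : a < b) (hX : t.le a X) (hY : t.ge b Y)
    (f : X ⟶ Y) : f = 0 := by
  have h1 : t.le 0 (X⟦a⟧) := t.le_shift a a 0 (by omega) X hX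
  have h2 : t.ge (b - a) (Y⟦a⟧) := t.ge_shift b a (b - a) (by omega) Y hY
  have h3 : t.ge 1 (Y⟦a⟧) := t.ge_antitone (by omega : (1:ℤ) ≤ b - a) _ h2
  have h4 : (shiftFunctor C a).map f = 0 := t.zero' _ h1 h3
  apply (shiftFunctor C a).map_injective
  rw [h4, Functor.map_zero]

lemma cancel_ι {n : ℤ} {x W : C} (hW : t.le n W) (g : W ⟶ (tr.truncLE n).obj x)
    (hg : g ≫ (tr.ι n).app x = 0) : g = 0 := by
  obtain ⟨s, hs⟩ := Triangle.coyoneda_exact₂ _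
    (inv_rot_of_distTriang _ (tr.triangle_mem n x)) g hg
  have hs0 : s = 0 := tzero t (show n < n + 2 by omega) hW
    (t.ge_shift (n+1) (-1) (n+2) (by omega) _ (tr.truncGE_ge (n+1) x)) s
  rw [hs, hs0, zero_comp]; rfl

lemma isZero_truncLE_of_ι_zero {n : ℤ} {x : C} (h : (tr.ι n).app x = 0) :
    IsZero ((tr.truncLE n).obj x) := by
  rw [IsZero.iff_id_eq_zero]
  exact cancel_ι t tr (tr.truncLE_le n x) (𝟙 _) (by rw [Category.id_comp, h])

lemma isZero_truncGE_of_π_zero {n : ℤ} {x : C} (h : (tr.π (n+1)).app x = 0) :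
    IsZero ((tr.truncGE (n+1)).obj x) := by
  rw [IsZero.iff_id_eq_zero]
  obtain ⟨ψ, hψ⟩ := Triangle.yoneda_exact₃ _ (tr.triangle_mem n x) (𝟙 _)
    (by rw [Category.comp_id]; exact h)
  have hψ0 : ψ = 0 := tzero t (show n - 1 < n + 1 by omega)
    (t.le_shift n 1 (n-1) (by omega) _ (tr.truncLE_le n x)) (tr.truncGE_ge (n+1) x) ψ
  rw [hψ0, comp_zero] at hψ
  exact hψ

lemma ge_of_isZero_truncLE {n : ℤ} {x : C} (h : IsZero ((tr.truncLE n).obj x)) :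
    t.ge (n+1) x := by
  have : IsIso ((Triangle.mk ((tr.ι n).app x) ((tr.π (n+1)).app x) (tr.δ n x)).mor₂) :=
    (Triangle.isZero₁_iff_isIso₂ _ (tr.triangle_mem n x)).1 h
  have h2 : IsIso ((tr.π (n+1)).app x) := this
  exact (ObjectProperty.prop_iff_of_iso (t.ge (n+1)) (asIso ((tr.π (n+1)).app x))).2 (tr.truncGE_ge _ _)

lemma le_of_isZero_truncGE {n : ℤ} {x : C} (h : IsZero ((tr.truncGE (n+1)).obj x)) :
    t.le n x := by
  have : IsIso ((Triangle.mk ((tr.ι n).app x) ((tr.π (n+1)).app x) (tr.δ n x)).mor₁) :=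
    (Triangle.isZero₃_iff_isIso₁ _ (tr.triangle_mem n x)).1 h
  have h2 : IsIso ((tr.ι n).app x) := this
  exact (ObjectProperty.prop_iff_of_iso (t.le n) (asIso ((tr.ι n).app x))).1 (tr.truncLE_le _ _)

include tr in
lemma ge_of_homzero {n : ℤ} {Y : C} (h : ∀ E : C, t.le (n-1) E → ∀ f : E ⟶ Y, f = 0) :
    t.ge n Y := by
  have h0 : (tr.ι (n-1)).app Y = 0 := h _ (tr.truncLE_le _ _) _
  have h2 := ge_of_isZero_truncLE t tr (isZero_truncLE_of_ι_zero t tr h0)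
  rwa [sub_add_cancel] at h2

include tr in
lemma le_of_homzero {n : ℤ} {Y : C} (h : ∀ E : C, t.ge (n+1) E → ∀ f : Y ⟶ E, f = 0) :
    t.le n Y := by
  have h0 : (tr.π (n+1)).app Y = 0 := h _ (tr.truncGE_ge _ _) _
  exact le_of_isZero_truncGE t tr (isZero_truncGE_of_π_zero t tr h0)

include tr in
lemma le₂_of_distTriang (T : Triangle C) (hT : T ∈ distTriang C) {n : ℤ}
    (h₁ : t.le n T.obj₁) (h₃ : t.le n T.obj₃) : t.le n T.obj₂ := by
  apply le_of_homzero t tr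
  intro E hE f
  obtain ⟨g, hg⟩ := Triangle.yoneda_exact₂ T hT f
    (tzero t (show n < n + 1 by omega) h₁ hE _)
  rw [hg, tzero t (show n < n + 1 by omega) h₃ hE g, comp_zero]

include tr in
lemma ge₂_of_distTriang (T : Triangle C) (hT : T ∈ distTriang C) {n : ℤ}
    (h₁ : t.ge n T.obj₁) (h₃ : t.ge n T.obj₃) : t.ge n T.obj₂ := by
  apply ge_of_homzero t tr
  intro E hE f
  obtain ⟨g, hg⟩ := Triangle.coyoneda_exact₂ T hT f
    (tzero t (show n - 1 < n by omega) hE h₃ _)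
  rw [hg, tzero t (show n - 1 < n by omega) hE h₁ g, zero_comp]

include tr in
lemma truncLE_ge {n : ℤ} {x : C} (hx : t.ge n x) : t.ge n ((tr.truncLE n).obj x) := by
  apply ge_of_homzero t tr
  intro E hE f
  exact cancel_ι t tr (t.le_monotone (show n - 1 ≤ n by omega) _ hE) f
    (tzero t (show n - 1 < n by omega) hE hx _)

/-- The "kernel object" map `(τ_{≤-1} c)⟦-1⟧ ⟶ y` attached to a morphism `q : c ⟶ y⟦1⟧`. -/
def kerMap {y c : C} (q : c ⟶ y⟦(1:ℤ)⟧) : ((tr.truncLE (-1)).obj c)⟦(-1:ℤ)⟧ ⟶ y :=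
  (shiftFunctor C (-1)).map ((tr.ι (-1)).app c ≫ q) ≫
    (shiftFunctorCompIsoId C (1:ℤ) (-1) (by omega)).hom.app y

lemma kerMap_comp {y x c : C} (f : y ⟶ x) (q : c ⟶ y⟦(1:ℤ)⟧)
    (hq : q ≫ (shiftFunctor C (1:ℤ)).map f = 0) : kerMap t tr q ≫ f = 0 := by
  dsimp only [kerMap]
  rw [Category.assoc]
  have hnat := (shiftFunctorCompIsoId C (1:ℤ) (-1) (by omega)).hom.naturality f
  simp only [Functor.id_map] at hnat
  rw [← hnat]
  have : (shiftFunctor C (-1)).map ((tr.ι (-1)).app c ≫ q) ≫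
      (shiftFunctor C (1:ℤ) ⋙ shiftFunctor C (-1:ℤ)).map f
      = (shiftFunctor C (-1)).map (((tr.ι (-1)).app c ≫ q) ≫ (shiftFunctor C (1:ℤ)).map f) := by
    simp only [Functor.map_comp, Functor.comp_map, Category.assoc]
  rw [← Category.assoc, this, Category.assoc, hq, comp_zero, Functor.map_zero, zero_comp]

lemma ι_comp_eq_zero_of_kerMap_eq_zero {y c : C} (q : c ⟶ y⟦(1:ℤ)⟧)
    (h : kerMap t tr q = 0) : (tr.ι (-1)).app c ≫ q = 0 := by
  apply (shiftFunctor C (-1:ℤ)).map_injective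
  rw [Functor.map_zero]
  exact (cancel_mono ((shiftFunctorCompIsoId C (1:ℤ) (-1) (by omega)).hom.app y)).1
    (by rw [zero_comp]; exact h)

/-- Conjugation: if `u ≫ g⟦-1⟧ = 0` then the `⟦1⟧`-conjugate of `u` composed with `g`
vanishes. -/
lemma conj_comp_eq_zero {z w v : C} (u : z ⟶ w⟦(-1:ℤ)⟧) (g : w ⟶ v)
    (h : u ≫ (shiftFunctor C (-1:ℤ)).map g = 0) :
    ((shiftFunctor C (1:ℤ)).map u ≫
      (shiftFunctorCompIsoId C (-1:ℤ) (1:ℤ) (by omega)).hom.app w) ≫ g = 0 := by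
  rw [Category.assoc]
  have hnat := (shiftFunctorCompIsoId C (-1:ℤ) (1:ℤ) (by omega)).hom.naturality g
  simp only [Functor.id_map] at hnat
  rw [← hnat]
  have : (shiftFunctor C (1:ℤ)).map u ≫
      (shiftFunctor C (-1:ℤ) ⋙ shiftFunctor C (1:ℤ)).map g
      = (shiftFunctor C (1:ℤ)).map (u ≫ (shiftFunctor C (-1:ℤ)).map g) := by
    simp only [Functor.map_comp, Functor.comp_map, Category.assoc]
  rw [← Category.assoc, this, h, Functor.map_zero, zero_comp]

end TStructureAux

/-! ### Main auxiliary lemmas -/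

section MainAux

variable [Linear k C] {sd : SerreOnCompacts k (C := C)} {d : ℕ}
  {t : TStructure C} {P : Set C}

lemma point_le (hP : IsPointSystem k sd d P) (hcog : Cogenerates t P)
    {x : C} (hx : x ∈ P) : t.le 0 x := by
  rw [hcog x (hP.point x hx).compact]
  intro z hz i hi f
  by_cases he : Nonempty (x ≅ z)
  · obtain ⟨e⟩ := he
    have h1 : f ≫ (shiftFunctor C i).map e.inv = 0 := (hP.point x hx).neg_ext i hi _
    calc f = (f ≫ (shiftFunctor C i).map e.inv) ≫ (shiftFunctor C i).map e.hom := by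
          rw [Category.assoc, ← Functor.map_comp, e.inv_hom_id,
            CategoryTheory.Functor.map_id, Category.comp_id]
      _ = 0 := by rw [h1, zero_comp]
  · exact hP.orthogonal x hx z hz he i f

lemma point_ne_zero (hP : IsPointSystem k sd d P) {x : C} (hx : x ∈ P) : ¬ IsZero x := by
  intro h
  obtain ⟨e, -⟩ := (hP.point x hx).sym_ext_algebra
  have hpow : (⋀[k]^0 (x ⟶ x⟦(1:ℤ)⟧) : Submodule k _) = 1 := pow_zero _
  have h1 : (1 : ExteriorAlgebra k (x ⟶ x⟦(1:ℤ)⟧)) ∈ ⋀[k]^0 (x ⟶ x⟦(1:ℤ)⟧) := by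
    rw [hpow, Submodule.one_eq_span]
    exact Submodule.mem_span_singleton_self _
  have h4 : (e 0).symm ⟨1, h1⟩ = (e 0).symm 0 := h.eq_of_src _ _
  have h5 : (⟨1, h1⟩ : ⋀[k]^0 (x ⟶ x⟦(1:ℤ)⟧)) = 0 := by
    have := congrArg (e 0) h4
    simpa using this
  have h6 : (1 : ExteriorAlgebra k (x ⟶ x⟦(1:ℤ)⟧)) = 0 := congrArg Subtype.val h5
  exact one_ne_zero h6

lemma point_hom_scalar (hP : IsPointSystem k sd d P) {x : C} (hx : x ∈ P) (ψ : x ⟶ x) :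
    ∃ a : k, ψ = a • 𝟙 x := by
  by_cases hz : IsZero x
  · exact ⟨0, by rw [zero_smul]; exact hz.eq_of_src _ _⟩
  obtain ⟨e, -⟩ := (hP.point x hx).sym_ext_algebra
  have hpow : (⋀[k]^0 (x ⟶ x⟦(1:ℤ)⟧) : Submodule k _) = 1 := pow_zero _
  have h1 : (1 : ExteriorAlgebra k (x ⟶ x⟦(1:ℤ)⟧)) ∈ ⋀[k]^0 (x ⟶ x⟦(1:ℤ)⟧) := by
    rw [hpow, Submodule.one_eq_span]
    exact Submodule.mem_span_singleton_self _
  set u : x ⟶ x⟦((0:ℕ):ℤ)⟧ := (e 0).symm ⟨1, h1⟩ with hu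
  have hscal : ∀ φ : x ⟶ x⟦((0:ℕ):ℤ)⟧, ∃ a : k, φ = a • u := by
    intro φ
    have hmem : ((e 0 φ : ⋀[k]^0 (x ⟶ x⟦(1:ℤ)⟧)) : ExteriorAlgebra k (x ⟶ x⟦(1:ℤ)⟧))
        ∈ (1 : Submodule k (ExteriorAlgebra k (x ⟶ x⟦(1:ℤ)⟧))) := by
      rw [← hpow]; exact (e 0 φ).2
    obtain ⟨a, ha⟩ := Submodule.mem_one.1 hmem
    refine ⟨a, ?_⟩
    have h2 : e 0 φ = a • (⟨1, h1⟩ : ⋀[k]^0 (x ⟶ x⟦(1:ℤ)⟧)) := by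
      apply Subtype.ext
      rw [SetLike.val_smul]
      show ((e 0 φ : ⋀[k]^0 (x ⟶ x⟦(1:ℤ)⟧)) : ExteriorAlgebra k (x ⟶ x⟦(1:ℤ)⟧))
        = a • (1 : ExteriorAlgebra k (x ⟶ x⟦(1:ℤ)⟧))
      rw [← ha, Algebra.algebraMap_eq_smul_one]
    calc φ = (e 0).symm (e 0 φ) := by rw [LinearEquiv.symm_apply_apply]
      _ = (e 0).symm (a • (⟨1, h1⟩ : ⋀[k]^0 (x ⟶ x⟦(1:ℤ)⟧))) := by rw [h2]
      _ = a • u := by rw [map_smul, hu]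
  have hobj : (x⟦((0:ℕ):ℤ)⟧ : C) = x⟦(0:ℤ)⟧ := by norm_num
  let ζ : (x⟦((0:ℕ):ℤ)⟧ : C) ≅ x := eqToIso hobj ≪≫ (shiftFunctorZero C ℤ).app x
  set U : x ⟶ x := u ≫ ζ.hom with hU
  have hscal' : ∀ φ : x ⟶ x, ∃ a : k, φ = a • U := by
    intro φ
    obtain ⟨a, ha⟩ := hscal (φ ≫ ζ.inv)
    refine ⟨a, ?_⟩
    calc φ = (φ ≫ ζ.inv) ≫ ζ.hom := by rw [Category.assoc, Iso.inv_hom_id, Category.comp_id]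
      _ = (a • u) ≫ ζ.hom := by rw [ha]
      _ = a • U := by rw [Linear.smul_comp, hU]
  obtain ⟨b, hb⟩ := hscal' (𝟙 x)
  have hbne : b ≠ 0 := by
    intro h0
    rw [h0, zero_smul] at hb
    exact hz (by rw [IsZero.iff_id_eq_zero]; exact hb)
  obtain ⟨a, ha⟩ := hscal' ψ
  refine ⟨a * b⁻¹, ?_⟩
  rw [hb, smul_smul, ha]
  congr 1
  field_simp

lemma point_isIso_of_ne_zero (hP : IsPointSystem k sd d P) {x : C} (hx : x ∈ P)
    {ψ : x ⟶ x} (hψ : ψ ≠ 0) : IsIso ψ := by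
  obtain ⟨a, rfl⟩ := point_hom_scalar k hP hx ψ
  have ha : a ≠ 0 := by
    intro h0
    rw [h0, zero_smul] at hψ
    exact hψ rfl
  refine ⟨a⁻¹ • 𝟙 x, ?_, ?_⟩ <;>
    simp [Linear.smul_comp, Linear.comp_smul, smul_smul,
      mul_inv_cancel₀ ha, inv_mul_cancel₀ ha]

lemma exists_hom_point (hcog : Cogenerates t P) {E : C} (hE : IsCompactObj E)
    (h1 : t.le 0 E) (h2 : t.ge 0 E) (hnz : ¬ IsZero E) :
    ∃ x ∈ P, ∃ f : E ⟶ x, f ≠ 0 := by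
  have hne : ¬ t.le 0 (E⟦(-1:ℤ)⟧) := by
    intro h
    have h3 : t.le (-1) (E⟦(-1:ℤ)⟧⟦(1:ℤ)⟧) := t.le_shift 0 1 (-1) (by omega) _ h
    have h4 : t.le (-1) E := (ObjectProperty.prop_iff_of_iso (t.le (-1))
      ((shiftFunctorCompIsoId C (-1:ℤ) (1:ℤ) (by omega)).app E)).1 h3
    exact hnz (by
      rw [IsZero.iff_id_eq_zero]
      exact tzero t (show (-1:ℤ) < 0 by omega) h4 h2 _)
  rw [hcog _ (hE.shift (-1))] at hne
  push_neg at hne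
  obtain ⟨z, hz, i, hi, f, hf⟩ := hne
  set g : E ⟶ z⟦i+1⟧ := (shiftFunctorCompIsoId C (-1:ℤ) (1:ℤ) (by omega)).inv.app E ≫
      (shiftFunctor C (1:ℤ)).map f ≫ (shiftFunctorAdd' C i 1 (i+1) rfl).inv.app z with hg
  have hgne : g ≠ 0 := by
    intro h0
    apply hf
    apply (shiftFunctor C (1:ℤ)).map_injective
    rw [Functor.map_zero]
    have hmf : (shiftFunctor C (1:ℤ)).map f
        = (shiftFunctorCompIsoId C (-1:ℤ) (1:ℤ) (by omega)).hom.app E ≫ g ≫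
          (shiftFunctorAdd' C i 1 (i+1) rfl).hom.app z := by
      rw [hg]; simp
    rw [hmf, h0, zero_comp, comp_zero]
  by_cases hlt : i + 1 < 0
  · exact absurd ((hcog E hE).mp h1 z hz (i+1) hlt g) hgne
  · have hi1 : i + 1 = 0 := by omega
    have hob : (z⟦i+1⟧ : C) = z⟦(0:ℤ)⟧ := by rw [hi1]
    refine ⟨z, hz, g ≫ eqToHom hob ≫ (shiftFunctorZero C ℤ).hom.app z, ?_⟩
    intro h0
    apply hgne
    exact (cancel_mono (eqToHom hob ≫ (shiftFunctorZero C ℤ).hom.app z)).1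
      (by rw [zero_comp]; exact h0)

lemma point_ge (tr : Truncation t) (hperf₁ : IsCompactTStructure t tr)
    (hP : IsPointSystem k sd d P) (hcog : Cogenerates t P)
    {x : C} (hx : x ∈ P) : t.ge 0 x := by
  have hxc := (hP.point x hx).compact
  have step : ∀ a : ℤ, a ≤ -1 → t.ge a x → t.ge (a+1) x := by
    intro a ha hGEa
    have hCle : t.le a ((tr.truncLE a).obj x) := tr.truncLE_le a x
    have hCc : IsCompactObj ((tr.truncLE a).obj x) := hperf₁.precompact_le x a hxc
    have hD1 : t.le 0 (((tr.truncLE a).obj x)⟦a⟧) := t.le_shift a a 0 (by omega) _ hCle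
    have hι : (tr.ι a).app x = 0 := by
      have hmap : (shiftFunctor C a).map ((tr.ι a).app x) = 0 :=
        (hcog _ (hCc.shift a)).mp hD1 x hx a (by omega) _
      apply (shiftFunctor C a).map_injective
      rw [hmap, Functor.map_zero]
    exact ge_of_isZero_truncLE t tr (isZero_truncLE_of_ι_zero t tr hι)
  obtain ⟨a, b, hab, hga, hlb⟩ := hperf₁.bounded x hxc
  by_cases ha : 0 ≤ a
  · exact t.ge_antitone ha x hga
  · push_neg at ha
    have claim : ∀ n : ℕ, t.ge (-(n:ℤ)) x → t.ge 0 x := by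
      intro n
      induction n with
      | zero => intro h; simpa using h
      | succ m ih =>
        intro h
        have h2 := step (-((m+1:ℕ):ℤ)) (by push_cast; omega) h
        have h3 : (-((m+1:ℕ):ℤ) + 1) = -(m:ℤ) := by push_cast; ring
        rw [h3] at h2
        exact ih h2
    have hcast : ((((-a).toNat : ℕ)):ℤ) = -a := Int.toNat_of_nonneg (by omega)
    refine claim (-a).toNat ?_
    rw [show (-(((-a).toNat : ℕ)):ℤ) = a by omega]
    exact hga

end MainAux

section MainAux2

variable [Linear k C] {sd : SerreOnCompacts k (C := C)} {d : ℕ}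
  {t : TStructure C} {P : Set C}

lemma point_simple (tr : Truncation t) (hperf₁ : IsCompactTStructure t tr)
    (hP : IsPointSystem k sd d P) (hcog : Cogenerates t P) {x : C} (hx : x ∈ P) :
    IsSimpleHeartObj t x := by
  have hxc := (hP.point x hx).compact
  have hxle := point_le k hP hcog hx
  have hxge := point_ge k tr hperf₁ hP hcog hx
  have hxnz := point_ne_zero k hP hx
  refine ⟨hxc, hxle, hxge, hxnz, ?_⟩
  intro y f hyc hyle hyge hmono
  obtain ⟨c, p, q, hT⟩ := distinguished_cocone_triangle f
  have hcle : t.le 0 c := le₂_of_distTriang t tr _ (rot_of_distTriang _ hT) hxle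
    (t.le_monotone (show (-1:ℤ) ≤ 0 by omega) _ (t.le_shift 0 1 (-1) (by omega) y hyle))
  have hcge : t.ge (-1) c := ge₂_of_distTriang t tr _ (rot_of_distTriang _ hT)
    (t.ge_antitone (show (-1:ℤ) ≤ 0 by omega) _ hxge)
    (t.ge_shift 0 1 (-1) (by omega) y hyge)
  have hK'le : t.le (-1) ((tr.truncLE (-1)).obj c) := tr.truncLE_le _ _
  have hK'ge : t.ge (-1) ((tr.truncLE (-1)).obj c) := truncLE_ge t tr hcge
  have hKle : t.le 0 (((tr.truncLE (-1)).obj c)⟦(-1:ℤ)⟧) :=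
    t.le_shift (-1) (-1) 0 (by omega) _ hK'le
  have hKge : t.ge 0 (((tr.truncLE (-1)).obj c)⟦(-1:ℤ)⟧) :=
    t.ge_shift (-1) (-1) 0 (by omega) _ hK'ge
  have hκf : kerMap t tr q ≫ f = 0 :=
    kerMap_comp t tr f q (comp_distTriang_mor_zero₃₁ _ hT)
  have hκ0 : kerMap t tr q = 0 :=
    hmono _ hKle hKge (kerMap t tr q) 0 (by rw [hκf, zero_comp])
  have hiq := ι_comp_eq_zero_of_kerMap_eq_zero t tr q hκ0
  obtain ⟨s, hs⟩ := Triangle.coyoneda_exact₃ _ hT ((tr.ι (-1)).app c) hiq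
  have hs0 : s = 0 := tzero t (show (-1:ℤ) < 0 by omega) hK'le hxge s
  have hι0 : (tr.ι (-1)).app c = 0 := by rw [hs, hs0, zero_comp]; rfl
  have hK' : IsZero ((tr.truncLE (-1)).obj c) := isZero_truncLE_of_ι_zero t tr hι0
  have hcge0 : t.ge 0 c := by
    have h5 := ge_of_isZero_truncLE t tr hK'
    have h6 : ((-1:ℤ)+1) = 0 := by omega
    rwa [h6] at h5
  by_cases hc0 : IsZero c
  · exact Or.inr ((Triangle.isZero₃_iff_isIso₁ _ hT).1 hc0)
  · left
    have hcc : IsCompactObj c := isCompactObj₃_of_distTriang _ hT hyc hxc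
    obtain ⟨z, hz, g, hgnz⟩ := exists_hom_point hcog hcc hcle hcge0 hc0
    have hzge := point_ge k tr hperf₁ hP hcog hz
    have hpg : p ≫ g ≠ 0 := by
      intro h0
      obtain ⟨ψ, hψ⟩ := Triangle.yoneda_exact₃ _ hT g h0
      have hψ0 : ψ = 0 := tzero t (show (-1:ℤ) < 0 by omega)
        (t.le_shift 0 1 (-1) (by omega) y hyle) hzge ψ
      exact hgnz (by rw [hψ, hψ0, comp_zero]; rfl)
    have hiso : Nonempty (x ≅ z) := by
      by_contra hne
      have h7 := hP.orthogonal x hx z hz hne 0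
        ((p ≫ g) ≫ (shiftFunctorZero C ℤ).inv.app z)
      apply hpg
      calc p ≫ g = ((p ≫ g) ≫ (shiftFunctorZero C ℤ).inv.app z) ≫
            (shiftFunctorZero C ℤ).hom.app z := by simp
        _ = 0 := by rw [h7, zero_comp]
    obtain ⟨e⟩ := hiso
    have hψnz : p ≫ g ≫ e.inv ≠ 0 := by
      intro h0
      apply hpg
      calc p ≫ g = (p ≫ g ≫ e.inv) ≫ e.hom := by simp
        _ = 0 := by rw [h0, zero_comp]
    have hIso : IsIso (p ≫ g ≫ e.inv) := point_isIso_of_ne_zero k hP hx hψnz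
    have hr : p ≫ (g ≫ e.inv ≫ inv (p ≫ g ≫ e.inv)) = 𝟙 x := by
      have : p ≫ g ≫ e.inv ≫ inv (p ≫ g ≫ e.inv)
          = (p ≫ g ≫ e.inv) ≫ inv (p ≫ g ≫ e.inv) := by
        simp only [Category.assoc]
      rw [this, IsIso.hom_inv_id]
    have hf0 : f = 0 := by
      have h1 : f ≫ p = 0 := comp_distTriang_mor_zero₁₂ _ hT
      calc f = f ≫ 𝟙 x := by rw [Category.comp_id]
        _ = f ≫ p ≫ (g ≫ e.inv ≫ inv (p ≫ g ≫ e.inv)) := by rw [hr]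
        _ = (f ≫ p) ≫ (g ≫ e.inv ≫ inv (p ≫ g ≫ e.inv)) := by
            simp only [Category.assoc]
        _ = 0 := by rw [h1, zero_comp]
    rw [IsZero.iff_id_eq_zero]
    exact hmono y hyle hyge (𝟙 y) 0 (by rw [Category.id_comp, hf0, zero_comp])

lemma simple_iso_point (tr : Truncation t) (hperf₁ : IsCompactTStructure t tr)
    (hperf₂ : NoetherianHeart t) (hP : IsPointSystem k sd d P) (hcog : Cogenerates t P)
    {y : C} (hy : IsSimpleHeartObj t y) : ∃ x ∈ P, Nonempty (y ≅ x) := by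
  obtain ⟨hyc, hyle, hyge, hynz, hysub⟩ := hy
  obtain ⟨x, hx, f, hfnz⟩ := exists_hom_point hcog hyc hyle hyge hynz
  have hxc := (hP.point x hx).compact
  have hxle := point_le k hP hcog hx
  have hxge := point_ge k tr hperf₁ hP hcog hx
  obtain ⟨c, p, q, hT⟩ := distinguished_cocone_triangle f
  have hcle : t.le 0 c := le₂_of_distTriang t tr _ (rot_of_distTriang _ hT) hxle
    (t.le_monotone (show (-1:ℤ) ≤ 0 by omega) _ (t.le_shift 0 1 (-1) (by omega) y hyle))
  have hcge : t.ge (-1) c := ge₂_of_distTriang t tr _ (rot_of_distTriang _ hT)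
    (t.ge_antitone (show (-1:ℤ) ≤ 0 by omega) _ hxge)
    (t.ge_shift 0 1 (-1) (by omega) y hyge)
  have hκf : kerMap t tr q ≫ f = 0 :=
    kerMap_comp t tr f q (comp_distTriang_mor_zero₃₁ _ hT)
  have hK'le : t.le (-1) ((tr.truncLE (-1)).obj c) := tr.truncLE_le _ _
  have hK'ge : t.ge (-1) ((tr.truncLE (-1)).obj c) := truncLE_ge t tr hcge
  have hKle : t.le 0 (((tr.truncLE (-1)).obj c)⟦(-1:ℤ)⟧) :=
    t.le_shift (-1) (-1) 0 (by omega) _ hK'le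
  have hKge : t.ge 0 (((tr.truncLE (-1)).obj c)⟦(-1:ℤ)⟧) :=
    t.ge_shift (-1) (-1) 0 (by omega) _ hK'ge
  have hκmono : MonoInHeart t (kerMap t tr q) := by
    intro z hzle hzge g h hgh
    have hsub : (g - h) ≫ kerMap t tr q = 0 := by
      rw [Preadditive.sub_comp, hgh, sub_self]
    have h1 : (g - h) ≫ (shiftFunctor C (-1:ℤ)).map ((tr.ι (-1)).app c ≫ q) = 0 := by
      dsimp only [kerMap] at hsub
      rw [← Category.assoc] at hsub
      exact (cancel_mono ((shiftFunctorCompIsoId C (1:ℤ) (-1:ℤ) (by omega)).hom.app y)).1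
        (by rw [zero_comp]; exact hsub)
    have h2 := conj_comp_eq_zero (g - h) ((tr.ι (-1)).app c ≫ q) h1
    have h3 : (((shiftFunctor C (1:ℤ)).map (g - h) ≫
        (shiftFunctorCompIsoId C (-1:ℤ) (1:ℤ) (by omega)).hom.app
          ((tr.truncLE (-1)).obj c)) ≫ (tr.ι (-1)).app c) ≫ q = 0 := by
      rw [Category.assoc]
      exact h2
    have hzle1 : t.le (-1) (z⟦(1:ℤ)⟧) := t.le_shift 0 1 (-1) (by omega) z hzle
    obtain ⟨s, hs⟩ := Triangle.coyoneda_exact₃ _ hT _ h3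
    have hs0 : s = 0 := tzero t (show (-1:ℤ) < 0 by omega) hzle1 hxge s
    have h4 : ((shiftFunctor C (1:ℤ)).map (g - h) ≫
        (shiftFunctorCompIsoId C (-1:ℤ) (1:ℤ) (by omega)).hom.app
          ((tr.truncLE (-1)).obj c)) ≫ (tr.ι (-1)).app c = 0 := by
      rw [hs, hs0, zero_comp]; rfl
    have h5 := cancel_ι t tr hzle1 _ h4
    have h6 : (shiftFunctor C (1:ℤ)).map (g - h) = 0 :=
      (cancel_mono ((shiftFunctorCompIsoId C (-1:ℤ) (1:ℤ) (by omega)).hom.app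
        ((tr.truncLE (-1)).obj c))).1 (by rw [zero_comp]; exact h5)
    have h7 : g - h = 0 := by
      apply (shiftFunctor C (1:ℤ)).map_injective; rw [h6, Functor.map_zero]
    exact sub_eq_zero.mp h7
  have hKc : IsCompactObj (((tr.truncLE (-1)).obj c)⟦(-1:ℤ)⟧) :=
    hperf₂ _ y (kerMap t tr q) ⟨hKle, hKge⟩ ⟨hyle, hyge⟩ hκmono hyc
  rcases hysub _ (kerMap t tr q) hKc hKle hKge hκmono with hKz | hκiso
  · have hK' : IsZero ((tr.truncLE (-1)).obj c) := by
      rw [IsZero.iff_id_eq_zero]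
      apply (shiftFunctor C (-1:ℤ)).map_injective
      rw [CategoryTheory.Functor.map_id, Functor.map_zero]
      exact (IsZero.iff_id_eq_zero _).1 hKz
    have hcge0 : t.ge 0 c := by
      have h5 := ge_of_isZero_truncLE t tr hK'
      have h6 : ((-1:ℤ)+1) = 0 := by omega
      rwa [h6] at h5
    have hfmono : MonoInHeart t f := by
      intro z hzle hzge g h hgh
      have hsub : (g - h) ≫ f = 0 := by rw [Preadditive.sub_comp, hgh, sub_self]
      obtain ⟨w, hw⟩ := Triangle.coyoneda_exact₂ _ (inv_rot_of_distTriang _ hT) (g - h) hsub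
      have hw0 : w = 0 := tzero t (show (0:ℤ) < 1 by omega) hzle
        (t.ge_shift 0 (-1) 1 (by omega) c hcge0) w
      have h8 : g - h = 0 := by rw [hw, hw0, zero_comp]; rfl
      exact sub_eq_zero.mp h8
    have hxs := point_simple k tr hperf₁ hP hcog hx
    rcases hxs.2.2.2.2 y f hyc hyle hyge hfmono with hy0 | hfiso
    · exact absurd hy0 hynz
    · exact ⟨x, hx, ⟨asIso f⟩⟩
  · exfalso
    apply hfnz
    haveI := hκiso
    calc f = inv (kerMap t tr q) ≫ (kerMap t tr q ≫ f) := by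
          rw [← Category.assoc, IsIso.inv_hom_id, Category.id_comp]
      _ = 0 := by rw [hκf, comp_zero]

end MainAux2
/-- Lemme 5.5 (2).  Let `T` be a saturated dg-category with a perfect
t-structure cogenerated by a point system `P` of dimension `d`.  Then `P` strongly
cogenerates the t-structure if and only if `P` coincides with the set of isomorphism
classes of simple objects of the heart `H` of the induced t-structure on `[T]`. -/
theorem strongly_cogenerates_iff_simples
    [IsAlgClosed k] [CharZero k] [Linear k C] [HasColimits C]
    -- properness of the saturated dg-category `T` of compact objects
    (hprop : ∀ (x y : C) (i : ℤ), IsCompactObj x → IsCompactObj y →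
      FiniteDimensional k (x ⟶ y⟦i⟧))
    (sd : SerreOnCompacts k (C := C))
    -- a perfect t-structure: compact, with noetherian heart
    (t : TStructure C) (tr : Truncation t)
    (hperf₁ : IsCompactTStructure t tr) (hperf₂ : NoetherianHeart t)
    -- a point system of dimension `d` cogenerating the t-structure
    (d : ℕ) (P : Set C) (hP : IsPointSystem k sd d P)
    (hcog : Cogenerates t P) :
    StronglyCogenerates t P ↔
      ((∀ x ∈ P, IsSimpleHeartObj t x) ∧
        ∀ y : C, IsSimpleHeartObj t y → ∃ x ∈ P, Nonempty (y ≅ x)) := by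
  constructor
  · intro _
    exact ⟨fun x hx => point_simple k tr hperf₁ hP hcog hx,
      fun y hy => simple_iso_point k tr hperf₁ hperf₂ hP hcog hy⟩
  · intro _
    refine ⟨hcog, ?_⟩
    intro E hE hle hge
    constructor
    · intro hzE x hx f
      exact hzE.eq_of_src f 0
    · intro hvan
      by_contra hnz
      obtain ⟨x, hx, f, hf⟩ := exists_hom_point hcog hE hle hge hnz
      exact hf (hvan x hx f)

end TV
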